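/- If C is the collision count of k i.i.d. uniform samples from a set of size m and k ≥ (10/ε)·√m for ε ∈ (0,1/2), then with probability at least 2/3, C > 0 and the estimator binom(k,2)/C lies in [(1−2ε)m, (1+2ε)m]. -/

import Mathlib

open MeasureTheory ProbabilityTheory Finset
open scoped ENNReal

section Aux

variable {Ω : Type*} [MeasureSpace Ω] [IsProbabilityMeasure (ℙ : Measure Ω)]
  {S : Type*} [Fintype S] [DecidableEq S] [MeasurableSpace S] [MeasurableSingletonClass S]
  {m k : ℕ} {X : Fin k → Ω → S}

lemma aux_single (hunif : ∀ (i : Fin k) (s : S), (ℙ {ω | X i ω = s}).toReal = 1 / m)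
    (i : Fin k) (s : S) : ℙ {ω | X i ω = s} = ENNReal.ofReal (1 / m) := by
  rw [← ENNReal.ofReal_toReal (measure_ne_top ℙ _), hunif i s]

lemma aux_value (hindep : iIndepFun X ℙ)
    (hunif : ∀ (i : Fin k) (s : S), (ℙ {ω | X i ω = s}).toReal = 1 / m)
    (T : Finset (Fin k)) (g : Fin k → S) :
    ℙ (⋂ i ∈ T, {ω | X i ω = g i}) = ENNReal.ofReal (1 / m) ^ T.card := by
  have h : (⋂ i ∈ T, {ω | X i ω = g i}) = ⋂ i ∈ T, X i ⁻¹' {g i} := rfl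
  rw [h, hindep.meas_biInter (fun i _ => ⟨{g i}, measurableSet_singleton _, rfl⟩)]
  rw [Finset.prod_congr rfl (fun i _ => show ℙ (X i ⁻¹' {g i}) = ENNReal.ofReal (1 / (m:ℝ)) from aux_single hunif i (g i)), prod_const]


lemma aux_one (hm : 1 ≤ m) : (m : ℝ≥0∞) * ENNReal.ofReal (1 / m) = 1 := by
  have hm0 : (m : ℝ) ≠ 0 := by positivity
  rw [← ENNReal.ofReal_natCast, ← ENNReal.ofReal_mul (by positivity)]
  rw [mul_one_div, div_self hm0, ENNReal.ofReal_one]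

lemma aux_pair (hm : 1 ≤ m) (hmS : Fintype.card S = m)
    (hmeas : ∀ i, Measurable (X i))
    (hindep : iIndepFun X ℙ)
    (hunif : ∀ (i : Fin k) (s : S), (ℙ {ω | X i ω = s}).toReal = 1 / m)
    {i j : Fin k} (hij : i ≠ j) :
    ℙ {ω | X i ω = X j ω} = ENNReal.ofReal (1 / (m : ℝ)) := by
  have hU : {ω | X i ω = X j ω}
      = ⋃ s : S, ⋂ t ∈ ({i, j} : Finset (Fin k)), {ω | X t ω = s} := by
    ext ω
    simp only [Set.mem_setOf_eq, Set.mem_iUnion, Set.mem_iInter, Finset.mem_insert,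
      Finset.mem_singleton]
    constructor
    · intro h
      exact ⟨X j ω, fun t ht => by rcases ht with rfl | rfl; exacts [h, rfl]⟩
    · rintro ⟨s, hs⟩
      rw [hs i (Or.inl rfl), hs j (Or.inr rfl)]
  rw [hU, measure_iUnion ?disj ?meas]
  · rw [tsum_fintype]
    have hval : ∀ s : S, ℙ (⋂ t ∈ ({i, j} : Finset (Fin k)), {ω | X t ω = s})
        = ENNReal.ofReal (1 / (m : ℝ)) ^ 2 := by
      intro s
      rw [aux_value hindep hunif _ (fun _ => s)]
      congr 1
      rw [Finset.card_insert_of_notMem (by simp [hij]), Finset.card_singleton]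
    rw [Finset.sum_congr rfl (fun s _ => hval s), Finset.sum_const, Finset.card_univ, hmS,
      nsmul_eq_mul]
    calc (m : ℝ≥0∞) * ENNReal.ofReal (1 / (m : ℝ)) ^ 2
        = (m * ENNReal.ofReal (1 / (m : ℝ))) * ENNReal.ofReal (1 / (m : ℝ)) := by ring
      _ = ENNReal.ofReal (1 / (m : ℝ)) := by rw [aux_one hm, one_mul]
  case disj =>
    intro s s' hss'
    simp only [Function.onFun]
    rw [Set.disjoint_left]
    intro ω h1 h2
    apply hss'
    have e1 := Set.mem_iInter₂.1 h1 i (by simp)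
    have e2 := Set.mem_iInter₂.1 h2 i (by simp)
    exact e1.symm.trans e2
  case meas =>
    intro s
    exact MeasurableSet.iInter fun t => MeasurableSet.iInter fun _ =>
      (hmeas t) (measurableSet_singleton s)

lemma aux_triple (hm : 1 ≤ m) (hmS : Fintype.card S = m)
    (hmeas : ∀ i, Measurable (X i))
    (hindep : iIndepFun X ℙ)
    (hunif : ∀ (i : Fin k) (s : S), (ℙ {ω | X i ω = s}).toReal = 1 / m)
    {a b c : Fin k} (hab : a ≠ b) (hac : a ≠ c) (hbc : b ≠ c) :
    ℙ ({ω | X a ω = X b ω} ∩ {ω | X a ω = X c ω})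
      = ENNReal.ofReal (1 / (m : ℝ)) ^ 2 := by
  have hU : {ω | X a ω = X b ω} ∩ {ω | X a ω = X c ω}
      = ⋃ s : S, ⋂ t ∈ ({a, b, c} : Finset (Fin k)), {ω | X t ω = s} := by
    ext ω
    simp only [Set.mem_inter_iff, Set.mem_setOf_eq, Set.mem_iUnion, Set.mem_iInter,
      Finset.mem_insert, Finset.mem_singleton]
    constructor
    · rintro ⟨h1, h2⟩
      refine ⟨X a ω, fun t ht => ?_⟩
      rcases ht with rfl | rfl | rfl
      exacts [rfl, h1.symm, h2.symm]
    · rintro ⟨s, hs⟩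
      rw [hs a (Or.inl rfl), hs b (Or.inr (Or.inl rfl)), hs c (Or.inr (Or.inr rfl))]
      exact ⟨rfl, rfl⟩
  rw [hU, measure_iUnion ?disj ?meas]
  · rw [tsum_fintype]
    have hval : ∀ s : S, ℙ (⋂ t ∈ ({a, b, c} : Finset (Fin k)), {ω | X t ω = s})
        = ENNReal.ofReal (1 / (m : ℝ)) ^ 3 := by
      intro s
      rw [aux_value hindep hunif _ (fun _ => s)]
      congr 1
      rw [Finset.card_insert_of_notMem (by simp [hab, hac]),
        Finset.card_insert_of_notMem (by simp [hbc]), Finset.card_singleton]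
    rw [Finset.sum_congr rfl (fun s _ => hval s), Finset.sum_const, Finset.card_univ, hmS,
      nsmul_eq_mul]
    calc (m : ℝ≥0∞) * ENNReal.ofReal (1 / (m : ℝ)) ^ 3
        = (m * ENNReal.ofReal (1 / (m : ℝ))) * ENNReal.ofReal (1 / (m : ℝ)) ^ 2 := by ring
      _ = ENNReal.ofReal (1 / (m : ℝ)) ^ 2 := by rw [aux_one hm, one_mul]
  case disj =>
    intro s s' hss'
    simp only [Function.onFun]
    rw [Set.disjoint_left]
    intro ω h1 h2
    apply hss'
    have e1 := Set.mem_iInter₂.1 h1 a (by simp)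
    have e2 := Set.mem_iInter₂.1 h2 a (by simp)
    exact e1.symm.trans e2
  case meas =>
    intro s
    exact MeasurableSet.iInter fun t => MeasurableSet.iInter fun _ =>
      (hmeas t) (measurableSet_singleton s)

lemma aux_quad (hm : 1 ≤ m) (hmS : Fintype.card S = m)
    (hmeas : ∀ i, Measurable (X i))
    (hindep : iIndepFun X ℙ)
    (hunif : ∀ (i : Fin k) (s : S), (ℙ {ω | X i ω = s}).toReal = 1 / m)
    {a b c d : Fin k} (hab : a ≠ b) (hac : a ≠ c) (had : a ≠ d)
    (hbc : b ≠ c) (hbd : b ≠ d) (hcd : c ≠ d) :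
    ℙ ({ω | X a ω = X b ω} ∩ {ω | X c ω = X d ω})
      = ENNReal.ofReal (1 / (m : ℝ)) ^ 2 := by
  set g : S × S → Fin k → S := fun st t => if t = c ∨ t = d then st.2 else st.1 with hg
  have hga : ∀ st, g st a = st.1 := fun st => by simp [hg, hac, had]
  have hgb : ∀ st, g st b = st.1 := fun st => by simp [hg, hbc, hbd]
  have hgc : ∀ st, g st c = st.2 := fun st => by simp [hg]
  have hgd : ∀ st, g st d = st.2 := fun st => by simp [hg]
  have hU : {ω | X a ω = X b ω} ∩ {ω | X c ω = X d ω}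
      = ⋃ st : S × S, ⋂ t ∈ ({a, b, c, d} : Finset (Fin k)), {ω | X t ω = g st t} := by
    ext ω
    simp only [Set.mem_inter_iff, Set.mem_setOf_eq, Set.mem_iUnion, Set.mem_iInter,
      Finset.mem_insert, Finset.mem_singleton]
    constructor
    · rintro ⟨h1, h2⟩
      refine ⟨(X a ω, X c ω), fun t ht => ?_⟩
      rcases ht with rfl | rfl | rfl | rfl
      · rw [hga]
      · rw [hgb]; exact h1.symm
      · rw [hgc]
      · rw [hgd]; exact h2.symm
    · rintro ⟨st, hs⟩
      have e1 := hs a (Or.inl rfl); rw [hga] at e1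
      have e2 := hs b (Or.inr (Or.inl rfl)); rw [hgb] at e2
      have e3 := hs c (Or.inr (Or.inr (Or.inl rfl))); rw [hgc] at e3
      have e4 := hs d (Or.inr (Or.inr (Or.inr rfl))); rw [hgd] at e4
      exact ⟨e1.trans e2.symm, e3.trans e4.symm⟩
  rw [hU, measure_iUnion ?disj ?meas]
  · rw [tsum_fintype]
    have hval : ∀ st : S × S, ℙ (⋂ t ∈ ({a, b, c, d} : Finset (Fin k)), {ω | X t ω = g st t})
        = ENNReal.ofReal (1 / (m : ℝ)) ^ 4 := by
      intro st
      rw [aux_value hindep hunif _ (g st)]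
      congr 1
      rw [Finset.card_insert_of_notMem (by simp [hab, hac, had]),
        Finset.card_insert_of_notMem (by simp [hbc, hbd]),
        Finset.card_insert_of_notMem (by simp [hcd]), Finset.card_singleton]
    rw [Finset.sum_congr rfl (fun st _ => hval st), Finset.sum_const, Finset.card_univ,
      Fintype.card_prod, hmS, nsmul_eq_mul, Nat.cast_mul]
    calc ((m : ℝ≥0∞) * m) * ENNReal.ofReal (1 / (m : ℝ)) ^ 4
        = ((m : ℝ≥0∞) * ENNReal.ofReal (1 / (m : ℝ)))
          * ((m : ℝ≥0∞) * ENNReal.ofReal (1 / (m : ℝ)))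
          * ENNReal.ofReal (1 / (m : ℝ)) ^ 2 := by ring
      _ = ENNReal.ofReal (1 / (m : ℝ)) ^ 2 := by rw [aux_one hm, one_mul, one_mul]
  case disj =>
    intro st st' hss'
    simp only [Function.onFun]
    rw [Set.disjoint_left]
    intro ω h1 h2
    apply hss'
    have e1 := Set.mem_iInter₂.1 h1 a (by simp)
    have e1' := Set.mem_iInter₂.1 h2 a (by simp)
    have e3 := Set.mem_iInter₂.1 h1 c (by simp)
    have e3' := Set.mem_iInter₂.1 h2 c (by simp)
    rw [Set.mem_setOf_eq, hga] at e1 e1'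
    rw [Set.mem_setOf_eq, hgc] at e3 e3'
    exact Prod.ext (e1.symm.trans e1') (e3.symm.trans e3')
  case meas =>
    intro st
    exact MeasurableSet.iInter fun t => MeasurableSet.iInter fun _ =>
      (hmeas t) (measurableSet_singleton _)


lemma aux_symmset {Ω S : Type*} {k : ℕ} (X : Fin k → Ω → S) (i j : Fin k) :
    {ω | X i ω = X j ω} = {ω | X j ω = X i ω} := by
  ext ω; exact eq_comm

end Aux

/-- The collision event for a pair of indices. -/
def AuxA {Ω S : Type*} {k : ℕ} (X : Fin k → Ω → S) (p : Fin k × Fin k) : Set Ω :=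
  {ω | X p.1 ω = X p.2 ω}

/-- The number of pairwise collisions among `X₁,…,X_k`. -/
noncomputable def collisionCount {Ω S : Type*} [DecidableEq S] (k : ℕ)
    (X : Fin k → Ω → S) (ω : Ω) : ℝ :=
  ∑ p ∈ Finset.univ.filter (fun p : Fin k × Fin k => p.1 < p.2),
    (if X p.1 ω = X p.2 ω then (1 : ℝ) else 0)

set_option maxHeartbeats 1600000 in
/-- If `C` is the collision count of `k` i.i.d. uniform samples from a set of
size `m` and `k ≥ (10/ε)·√m` for `ε ∈ (0,1/2)`, then with probability at least
`2/3`, `C > 0` and the estimator `binom(k,2)/C` lies in `[(1−2ε)m, (1+2ε)m]`. -/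
theorem stmt12 {Ω : Type*} [MeasureSpace Ω] [IsProbabilityMeasure (ℙ : Measure Ω)]
    {S : Type*} [Fintype S] [DecidableEq S] [MeasurableSpace S]
    [MeasurableSingletonClass S]
    (m k : ℕ) (hmS : Fintype.card S = m) (hm : 1 ≤ m)
    (ε : ℝ) (hε0 : 0 < ε) (hε1 : ε < 1 / 2)
    (hk : (k : ℝ) ≥ (10 / ε) * Real.sqrt m)
    (X : Fin k → Ω → S) (hmeas : ∀ i, Measurable (X i))
    (hindep : iIndepFun X ℙ)
    (hunif : ∀ (i : Fin k) (s : S), (ℙ {ω | X i ω = s}).toReal = 1 / m) :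
    (2 : ℝ) / 3 ≤
      (ℙ {ω | 0 < collisionCount k X ω ∧
        (1 - 2 * ε) * m ≤ (k.choose 2 : ℝ) / collisionCount k X ω ∧
        (k.choose 2 : ℝ) / collisionCount k X ω ≤ (1 + 2 * ε) * m}).toReal := by
  classical
  have hm1R : (1:ℝ) ≤ m := by exact_mod_cast hm
  have hmR : (0:ℝ) < m := by linarith
  set P : Finset (Fin k × Fin k) :=
    Finset.univ.filter (fun p : Fin k × Fin k => p.1 < p.2) with hPdef
  set N : ℕ := k.choose 2 with hNdef
  -- cardinality of the index set
  have hPcard : P.card = N := by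
    rw [hPdef, hNdef, Finset.card_filter, Fintype.sum_prod_type_right]
    have hrow : ∀ j : Fin k, (∑ i : Fin k, if i < j then (1:ℕ) else 0) = (j:ℕ) := by
      intro j
      have hcast : ∀ i : Fin k, (if i < j then (1:ℕ) else 0)
          = (if (i:ℕ) < (j:ℕ) then (1:ℕ) else 0) := by
        intro i; exact if_congr Fin.lt_def rfl rfl
      rw [Finset.sum_congr rfl (fun i _ => hcast i),
        Fin.sum_univ_eq_sum_range (fun i => if i < (j:ℕ) then (1:ℕ) else 0)]
      rw [← Finset.card_filter]
      have : (Finset.range k).filter (fun i => i < (j:ℕ)) = Finset.range (j:ℕ) := by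
        ext x
        simp only [Finset.mem_filter, Finset.mem_range]
        have := j.isLt
        omega
      rw [this, Finset.card_range]
    rw [Finset.sum_congr rfl (fun j _ => hrow j)]
    rw [Fin.sum_univ_eq_sum_range (fun i => i), Finset.sum_range_id, Nat.choose_two_right]
  -- measurability
  have hAmeas : ∀ p : Fin k × Fin k, MeasurableSet (AuxA X p) := fun p =>
    measurableSet_eq_fun (hmeas p.1) (hmeas p.2)
  have hCfun : collisionCount k X
      = fun ω => ∑ p ∈ P, (AuxA X p).indicator (fun _ => (1:ℝ)) ω := by
    funext ω
    refine Finset.sum_congr rfl (fun p _ => ?_)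
    by_cases h : X p.1 ω = X p.2 ω <;>
      simp [Set.indicator_apply, AuxA, h]
  have hCmeas : Measurable (collisionCount k X) := by
    rw [hCfun]
    exact Finset.measurable_sum _ (fun p _ => measurable_const.indicator (hAmeas p))
  -- measure of single collision events
  have hval1 : ∀ p ∈ P, ℙ (AuxA X p) = ENNReal.ofReal (1/(m:ℝ)) := by
    intro p hp
    have hlt : p.1 < p.2 := (Finset.mem_filter.1 hp).2
    exact aux_pair hm hmS hmeas hindep hunif (ne_of_lt hlt)
  -- measure of pairwise intersections
  have hval2 : ∀ p ∈ P, ∀ q ∈ P, p ≠ q →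
      ℙ (AuxA X p ∩ AuxA X q) = ENNReal.ofReal (1/(m:ℝ))^2 := by
    intro p hp q hq hpq
    have hij : p.1 < p.2 := (Finset.mem_filter.1 hp).2
    have hab : q.1 < q.2 := (Finset.mem_filter.1 hq).2
    show ℙ ({ω | X p.1 ω = X p.2 ω} ∩ {ω | X q.1 ω = X q.2 ω}) = _
    by_cases h1 : p.1 = q.1
    · have h22 : p.2 ≠ q.2 := fun h => hpq (Prod.ext h1 h)
      rw [← h1]
      have hac : p.1 ≠ q.2 := by
        have : p.1 < q.2 := by rw [h1]; exact hab
        exact ne_of_lt this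
      exact aux_triple hm hmS hmeas hindep hunif (ne_of_lt hij) hac h22
    · by_cases h2 : p.1 = q.2
      · rw [← h2, aux_symmset X q.1 p.1]
        have hq1p1 : q.1 < p.1 := by rw [h2]; exact hab
        exact aux_triple hm hmS hmeas hindep hunif (ne_of_lt hij)
          (Ne.symm (ne_of_lt hq1p1)) (Ne.symm (ne_of_lt (lt_trans hq1p1 hij)))
      · by_cases h3 : p.2 = q.1
        · rw [← h3, aux_symmset X p.1 p.2]
          have hp2q2 : p.2 < q.2 := by rw [h3]; exact hab
          exact aux_triple hm hmS hmeas hindep hunif (Ne.symm (ne_of_lt hij))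
            (ne_of_lt hp2q2) (ne_of_lt (lt_trans hij hp2q2))
        · by_cases h4 : p.2 = q.2
          · rw [← h4, aux_symmset X p.1 p.2, aux_symmset X q.1 p.2]
            have hq1p2 : q.1 < p.2 := by rw [h4]; exact hab
            exact aux_triple hm hmS hmeas hindep hunif (Ne.symm (ne_of_lt hij))
              (Ne.symm (ne_of_lt hq1p2)) h1
          · exact aux_quad hm hmS hmeas hindep hunif (ne_of_lt hij) h1 h2 h3 h4
              (ne_of_lt hab)
  -- integrability
  have hint : ∀ p : Fin k × Fin k, Integrable ((AuxA X p).indicator (fun _ => (1:ℝ))) ℙ :=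
    fun p => (integrable_const 1).indicator (hAmeas p)
  have hint2 : ∀ p q : Fin k × Fin k,
      Integrable (((AuxA X p) ∩ (AuxA X q)).indicator (fun _ => (1:ℝ))) ℙ :=
    fun p q => (integrable_const 1).indicator ((hAmeas p).inter (hAmeas q))
  -- expectation
  have hE : ∫ ω, collisionCount k X ω = (N:ℝ)/m := by
    rw [hCfun, integral_finset_sum P (fun p _ => hint p)]
    have hterm : ∀ p ∈ P, ∫ ω, (AuxA X p).indicator (fun _ => (1:ℝ)) ω = 1/(m:ℝ) := by
      intro p hp
      rw [integral_indicator_const (1:ℝ) (hAmeas p), measureReal_def, hval1 p hp, smul_eq_mul, mul_one,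
        ENNReal.toReal_ofReal (by positivity)]
    rw [Finset.sum_congr rfl hterm, Finset.sum_const, hPcard, nsmul_eq_mul]
    ring
  -- Memℒp
  have hmem : MemLp (collisionCount k X) 2 ℙ := by
    rw [hCfun]
    exact memLp_finsetSum P (fun p _ =>
      memLp_indicator_const 2 (hAmeas p) 1 (Or.inr (measure_ne_top _ _)))
  -- N is positive
  have hsqrt1 : (1:ℝ) ≤ Real.sqrt m := by
    rw [show (1:ℝ) = Real.sqrt 1 by simp]
    exact Real.sqrt_le_sqrt (by exact_mod_cast hm)
  have hdiv20 : (20:ℝ) ≤ 10/ε := by rw [le_div_iff₀ hε0]; nlinarith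
  have hk20 : (20:ℝ) ≤ (k:ℝ) := by
    have h20 : (20:ℝ)*1 ≤ (10/ε)*Real.sqrt m :=
      mul_le_mul hdiv20 hsqrt1 (by norm_num) (by positivity)
    rw [mul_one] at h20
    linarith [hk]
  have hk2 : 2 ≤ k := by exact_mod_cast (show (2:ℝ) ≤ (k:ℝ) by linarith)
  have hN1 : 1 ≤ N := Nat.choose_pos hk2
  have hN1R : (1:ℝ) ≤ (N:ℝ) := by exact_mod_cast hN1
  have hEpos : (0:ℝ) < (N:ℝ)/m := by positivity
  -- second moment
  have hE2 : ∫ ω, (collisionCount k X ω)^2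
      = (N:ℝ) * (1/(m:ℝ) + ((N:ℝ)-1) * (1/(m:ℝ))^2) := by
    have hprodind : ∀ p q (ω : Ω),
        (AuxA X p).indicator (fun _ => (1:ℝ)) ω * (AuxA X q).indicator (fun _ => (1:ℝ)) ω
        = ((AuxA X p) ∩ (AuxA X q)).indicator (fun _ => (1:ℝ)) ω := by
      intro p q ω
      by_cases h1 : ω ∈ AuxA X p <;> by_cases h2 : ω ∈ AuxA X q <;>
        simp [Set.indicator_apply, h1, h2]
    have hre : (fun ω => (collisionCount k X ω)^2)
        = fun ω => ∑ p ∈ P, ∑ q ∈ P,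
            ((AuxA X p ∩ AuxA X q).indicator (fun _ => (1:ℝ)) ω) := by
      funext ω
      rw [hCfun, sq, Finset.sum_mul_sum]
      exact Finset.sum_congr rfl (fun p _ => Finset.sum_congr rfl
        (fun q _ => hprodind p q ω))
    rw [hre, integral_finset_sum P (fun p _ =>
      integrable_finset_sum P (fun q _ => hint2 p q))]
    have hrow : ∀ p ∈ P, (∫ ω, ∑ q ∈ P,
        ((AuxA X p ∩ AuxA X q).indicator (fun _ => (1:ℝ)) ω))
        = 1/(m:ℝ) + ((N:ℝ)-1) * (1/(m:ℝ))^2 := by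
      intro p hp
      rw [integral_finset_sum P (fun q _ => hint2 p q)]
      have hterm : ∀ q ∈ P, ∫ ω, ((AuxA X p ∩ AuxA X q).indicator (fun _ => (1:ℝ)) ω)
          = (ℙ (AuxA X p ∩ AuxA X q)).toReal := by
        intro q _
        rw [integral_indicator_const (1:ℝ) ((hAmeas p).inter (hAmeas q)), measureReal_def, smul_eq_mul,
          mul_one]
      rw [Finset.sum_congr rfl hterm, ← Finset.add_sum_erase P _ hp]
      congr 1
      · rw [Set.inter_self, hval1 p hp, ENNReal.toReal_ofReal (by positivity)]
      · have hoff : ∀ q ∈ P.erase p, (ℙ (AuxA X p ∩ AuxA X q)).toReal = (1/(m:ℝ))^2 := by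
          intro q hq
          rw [hval2 p hp q (Finset.mem_of_mem_erase hq) (Finset.ne_of_mem_erase hq).symm,
            ENNReal.toReal_pow, ENNReal.toReal_ofReal (by positivity)]
        rw [Finset.sum_congr rfl hoff, Finset.sum_const, Finset.card_erase_of_mem hp,
          hPcard, nsmul_eq_mul, Nat.cast_sub hN1, Nat.cast_one]
    rw [Finset.sum_congr rfl hrow, Finset.sum_const, hPcard, nsmul_eq_mul]
  -- variance
  have hVar : variance (collisionCount k X) ℙ = (N:ℝ)/m - (N:ℝ)/(m:ℝ)^2 := by
    rw [variance_eq_sub hmem]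
    have hpow : (collisionCount k X)^2 = fun ω => (collisionCount k X ω)^2 := by
      funext ω; exact Pi.pow_apply _ _ _
    rw [hpow, hE2, hE]
    field_simp
    ring
  have hVarle : variance (collisionCount k X) ℙ ≤ (N:ℝ)/m := by
    rw [hVar]
    have : (0:ℝ) ≤ (N:ℝ)/(m:ℝ)^2 := by positivity
    linarith
  -- numeric bound : 3 ≤ ε² (N/m)
  have hεk : 10*Real.sqrt m ≤ ε*k := by
    rw [ge_iff_le, div_mul_eq_mul_div, div_le_iff₀ hε0] at hk
    nlinarith
  have hsqm : 100*(m:ℝ) ≤ ε^2*(k:ℝ)^2 := by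
    nlinarith [mul_self_le_mul_self (by positivity : (0:ℝ) ≤ 10*Real.sqrt m) hεk,
      Real.sq_sqrt (show (0:ℝ) ≤ (m:ℝ) by positivity)]
  have hNcast : (N:ℝ) = (k:ℝ)*((k:ℝ)-1)/2 := by
    rw [hNdef]; exact_mod_cast Nat.cast_choose_two ℝ k
  have h3m : 3*(m:ℝ) ≤ ε^2*(N:ℝ) := by
    have h20 : (0:ℝ) ≤ ε^2*(k:ℝ)*((k:ℝ)-20) := by
      have : (0:ℝ) ≤ (k:ℝ) - 20 := by linarith
      positivity
    nlinarith [hsqm, hm1R]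
  have h3 : 3 ≤ ε^2*((N:ℝ)/m) := by
    rw [← mul_div_assoc, le_div_iff₀ hmR]
    linarith
  -- Chebyshev
  have hcheb := meas_ge_le_variance_div_sq (μ := ℙ) hmem
    (mul_pos hε0 hEpos)
  rw [hE] at hcheb
  have hb : variance (collisionCount k X) ℙ / (ε*((N:ℝ)/m))^2 ≤ 1/3 := by
    rw [div_le_iff₀ (by positivity)]
    have h' := mul_le_mul_of_nonneg_left h3 (le_of_lt hEpos)
    nlinarith [hVarle, h']
  have hBmeas : MeasurableSet {ω | ε*((N:ℝ)/m) ≤ |collisionCount k X ω - (N:ℝ)/m|} :=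
    measurableSet_le measurable_const ((hCmeas.sub measurable_const).abs)
  have hble : (ℙ {ω | ε*((N:ℝ)/m) ≤ |collisionCount k X ω - (N:ℝ)/m|}).toReal ≤ 1/3 :=
    ENNReal.toReal_le_of_le_ofReal (by norm_num)
      (hcheb.trans (ENNReal.ofReal_le_ofReal hb))
  -- inclusion of the good event
  have hsub : {ω | ε*((N:ℝ)/m) ≤ |collisionCount k X ω - (N:ℝ)/m|}ᶜ ⊆
      {ω | 0 < collisionCount k X ω ∧
        (1 - 2 * ε) * m ≤ (N : ℝ) / collisionCount k X ω ∧
        (N : ℝ) / collisionCount k X ω ≤ (1 + 2 * ε) * m} := by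
    intro ω hω
    simp only [Set.mem_compl_iff, Set.mem_setOf_eq, not_le] at hω
    have habs := abs_lt.1 hω
    have hlo : (1-ε)*((N:ℝ)/m) < collisionCount k X ω := by nlinarith [habs.1]
    have hhi : collisionCount k X ω < (1+ε)*((N:ℝ)/m) := by nlinarith [habs.2]
    have hcpos : 0 < collisionCount k X ω := by nlinarith [hEpos, hε1]
    have hmc : (m:ℝ) * collisionCount k X ω ≤ (1+ε)*(N:ℝ) := by
      have h' : collisionCount k X ω ≤ ((1+ε)*(N:ℝ))/m := by
        have : (1+ε)*((N:ℝ)/m) = ((1+ε)*(N:ℝ))/m := by ring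
        linarith [hhi, this.le]
      calc (m:ℝ) * collisionCount k X ω ≤ m * (((1+ε)*(N:ℝ))/m) := by
            exact mul_le_mul_of_nonneg_left h' (le_of_lt hmR)
        _ = (1+ε)*(N:ℝ) := by field_simp
    have hmc2 : (1-ε)*(N:ℝ) ≤ (m:ℝ) * collisionCount k X ω := by
      have h' : ((1-ε)*(N:ℝ))/m ≤ collisionCount k X ω := by
        have : (1-ε)*((N:ℝ)/m) = ((1-ε)*(N:ℝ))/m := by ring
        linarith [hlo, this.ge]
      calc (1-ε)*(N:ℝ) = m * (((1-ε)*(N:ℝ))/m) := by field_simp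
        _ ≤ (m:ℝ) * collisionCount k X ω := mul_le_mul_of_nonneg_left h' (le_of_lt hmR)
    refine ⟨hcpos, ?_, ?_⟩
    · rw [le_div_iff₀ hcpos]
      nlinarith [hmc, mul_le_mul_of_nonneg_left hmc (by linarith : (0:ℝ) ≤ 1-2*ε),
        mul_nonneg hε0.le (Nat.cast_nonneg N), mul_nonneg (mul_nonneg hε0.le hε0.le)
          (Nat.cast_nonneg N)]
    · rw [div_le_iff₀ hcpos]
      nlinarith [hmc2, mul_le_mul_of_nonneg_left hmc2 (by linarith : (0:ℝ) ≤ 1+2*ε),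
        mul_nonneg hε0.le (Nat.cast_nonneg N), mul_nonneg (mul_nonneg hε0.le hε0.le)
          (Nat.cast_nonneg N)]
  -- conclusion
  calc (2:ℝ)/3 ≤ 1 - (ℙ {ω | ε*((N:ℝ)/m) ≤
        |collisionCount k X ω - (N:ℝ)/m|}).toReal := by linarith
    _ = (ℙ ({ω | ε*((N:ℝ)/m) ≤ |collisionCount k X ω - (N:ℝ)/m|}ᶜ)).toReal := by
        rw [prob_compl_eq_one_sub hBmeas,
          ENNReal.toReal_sub_of_le prob_le_one ENNReal.one_ne_top, ENNReal.toReal_one]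
    _ ≤ _ := ENNReal.toReal_mono (measure_ne_top _ _) (measure_mono hsub)
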